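/- Let G = (Ω, E) be a graph, Ĕ the smallest equivalence relation on Ω containing E, Γ_G the alphabet of letters a_{(u,v)} for (u,v) ∈ Ĕ, and R_G the edge reduction rules consisting of ((a_{(u,v)}, a_{(v,w)}), a_{(u,w)}) for (u,v),(v,w),(u,w) ∈ Ĕ and (a_{(u,u)}, 1) for u ∈ Ω. Then the string-rewriting system (Γ_G*, →_{R_G}) is Noetherian and confluent. -/

import Mathlib

/-- The edge alphabet of a graph `(Ω, E)`: one letter `a_{(u,v)}` for each pair `(u,v)` in
the smallest equivalence relation `Ĕ` on `Ω` containing `E`. -/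
def GraphLetter {Ω : Type*} (E : Ω → Ω → Prop) : Type _ :=
  { p : Ω × Ω // Relation.EqvGen E p.1 p.2 }

/-- The one-step rewriting relation on words over the edge alphabet induced by the edge
reduction rules: `(a_{(u,u)}, 1)` for `u ∈ Ω` and `((a_{(u,v)}, a_{(v,w)}), a_{(u,w)})`
for `(u,v), (v,w), (u,w) ∈ Ĕ`, applied in arbitrary context. -/
def GraphStep {Ω : Type*} (E : Ω → Ω → Prop) (x y : List (GraphLetter E)) : Prop :=
  (∃ (w w' : List (GraphLetter E)) (a : GraphLetter E),
      a.1.1 = a.1.2 ∧ x = w ++ [a] ++ w' ∧ y = w ++ w') ∨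
  (∃ (w w' : List (GraphLetter E)) (a b c : GraphLetter E),
      a.1.2 = b.1.1 ∧ c.1.1 = a.1.1 ∧ c.1.2 = b.1.2 ∧
      x = w ++ [a, b] ++ w' ∧ y = w ++ [c] ++ w')

namespace GraphAux

attribute [local instance] Classical.propDecidable

variable {Ω : Type*} {E : Ω → Ω → Prop}

/-- Composition of two composable letters. -/
def comp (a b : GraphLetter E) (h : a.1.2 = b.1.1) : GraphLetter E :=
  ⟨(a.1.1, b.1.2), Relation.EqvGen.trans a.1.1 a.1.2 b.1.2 a.2 (by rw [h]; exact b.2)⟩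

/-- Normal words: no identity letters, no adjacent composable letters. -/
def Normal (l : List (GraphLetter E)) : Prop :=
  (∀ a ∈ l, a.1.1 ≠ a.1.2) ∧ l.Chain' (fun a b => a.1.2 ≠ b.1.1)

lemma normalTail {b : GraphLetter E} {t : List (GraphLetter E)} (h : Normal (b :: t)) :
    Normal t :=
  ⟨fun a ha => h.1 a (List.mem_cons_of_mem _ ha), h.2.tail⟩

noncomputable def push (a : GraphLetter E) : List (GraphLetter E) → List (GraphLetter E)
  | [] => if a.1.1 = a.1.2 then [] else [a]
  | b :: t =>
      if h : a.1.2 = b.1.1 then push (comp a b h) t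
      else if a.1.1 = a.1.2 then b :: t else a :: b :: t

noncomputable def norm (l : List (GraphLetter E)) : List (GraphLetter E) := l.foldr push []

lemma pushFix {b : GraphLetter E} {t : List (GraphLetter E)} (h : Normal (b :: t)) :
    push b t = b :: t := by
  cases t with
  | nil => simp [push, h.1 b (by simp)]
  | cons d r =>
    have h1 : b.1.2 ≠ d.1.1 := (List.isChain_cons_cons.mp h.2).1
    simp [push, h1, h.1 b (by simp)]

lemma pushId {s : List (GraphLetter E)} (hs : Normal s) {a : GraphLetter E}
    (ha : a.1.1 = a.1.2) : push a s = s := by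
  cases s with
  | nil => simp [push, ha]
  | cons b t =>
    by_cases h : a.1.2 = b.1.1
    · have hc : comp a b h = b :=
        Subtype.ext (show (a.1.1, b.1.2) = b.1 by rw [ha, h])
      simp only [push, dif_pos h, hc]
      exact pushFix hs
    · simp [push, h, ha]

lemma pushNormal : ∀ (s : List (GraphLetter E)), Normal s →
    ∀ a : GraphLetter E, Normal (push a s)
  | [], _, a => by
    by_cases ha : a.1.1 = a.1.2
    · rw [show push a [] = [] from by simp [push, ha]]
      exact ⟨fun x hx => absurd hx (List.not_mem_nil), List.isChain_nil⟩
    · refine ?_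
      rw [show push a [] = [a] from by simp [push, ha]]
      exact ⟨by simpa using ha, List.isChain_singleton a⟩
  | b :: t, hs, a => by
    by_cases h : a.1.2 = b.1.1
    · rw [show push a (b :: t) = push (comp a b h) t from by simp [push, h]]
      exact pushNormal t (normalTail hs) _
    · by_cases ha : a.1.1 = a.1.2
      · rw [show push a (b :: t) = b :: t from by simp [push, h, ha]]
        exact hs
      · rw [show push a (b :: t) = a :: b :: t from by simp [push, h, ha]]
        refine ⟨?_, List.isChain_cons_cons.mpr ⟨h, hs.2⟩⟩
        intro x hx
        rcases List.mem_cons.mp hx with rfl | hx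
        · exact ha
        · exact hs.1 x hx

lemma normNormal (l : List (GraphLetter E)) : Normal (norm l) := by
  induction l with
  | nil => exact ⟨fun x hx => absurd hx (List.not_mem_nil), List.isChain_nil⟩
  | cons a l ih => exact pushNormal _ ih a

lemma pushComp : ∀ (s : List (GraphLetter E)), Normal s →
    ∀ (a b : GraphLetter E) (h : a.1.2 = b.1.1),
      push a (push b s) = push (comp a b h) s
  | [], _, a, b, h => by
    by_cases hb : b.1.1 = b.1.2
    · have hc : comp a b h = a :=
        Subtype.ext (show (a.1.1, b.1.2) = a.1 by rw [← hb, ← h])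
      rw [show push b [] = [] from by simp [push, hb], hc]
    · rw [show push b [] = [b] from by simp [push, hb]]
      simp [push, h]
  | d :: t, hs, a, b, h => by
    by_cases hb : b.1.2 = d.1.1
    · have h' : a.1.2 = (comp b d hb).1.1 := h
      have h2 : (comp a b h).1.2 = d.1.1 := hb
      have hcc : comp a (comp b d hb) h' = comp (comp a b h) d h2 := rfl
      calc push a (push b (d :: t)) = push a (push (comp b d hb) t) := by simp [push, hb]
        _ = push (comp a (comp b d hb) h') t := pushComp t (normalTail hs) a _ h'
        _ = push (comp (comp a b h) d h2) t := by rw [hcc]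
        _ = push (comp a b h) (d :: t) := by simp [push, h2]
    · by_cases hbid : b.1.1 = b.1.2
      · have hc : comp a b h = a :=
          Subtype.ext (show (a.1.1, b.1.2) = a.1 by rw [← hbid, ← h])
        rw [pushId hs hbid, hc]
      · rw [show push b (d :: t) = b :: d :: t from by simp [push, hb, hbid]]
        simp [push, h]

lemma pushReach : ∀ (s : List (GraphLetter E)), Normal s → ∀ a : GraphLetter E,
    Relation.ReflTransGen (GraphStep E) (a :: s) (push a s)
  | [], _, a => by
    by_cases ha : a.1.1 = a.1.2
    · rw [show push a [] = [] from by simp [push, ha]]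
      exact Relation.ReflTransGen.single (Or.inl ⟨[], [], a, ha, rfl, rfl⟩)
    · rw [show push a [] = [a] from by simp [push, ha]]
  | b :: t, hs, a => by
    by_cases h : a.1.2 = b.1.1
    · have step : GraphStep E (a :: b :: t) (comp a b h :: t) :=
        Or.inr ⟨[], t, a, b, comp a b h, h, rfl, rfl, rfl, rfl⟩
      rw [show push a (b :: t) = push (comp a b h) t from by simp [push, h]]
      exact (Relation.ReflTransGen.single step).trans (pushReach t (normalTail hs) _)
    · by_cases ha : a.1.1 = a.1.2
      · rw [show push a (b :: t) = b :: t from by simp [push, h, ha]]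
        exact Relation.ReflTransGen.single (Or.inl ⟨[], b :: t, a, ha, rfl, rfl⟩)
      · rw [show push a (b :: t) = a :: b :: t from by simp [push, h, ha]]

lemma consStep {x y : List (GraphLetter E)} (a : GraphLetter E) (h : GraphStep E x y) :
    GraphStep E (a :: x) (a :: y) := by
  rcases h with ⟨w, w', b, hb, rfl, rfl⟩ | ⟨w, w', b, c, d, h1, h2, h3, rfl, rfl⟩
  · exact Or.inl ⟨a :: w, w', b, hb, rfl, rfl⟩
  · exact Or.inr ⟨a :: w, w', b, c, d, h1, h2, h3, rfl, rfl⟩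

lemma normReach : ∀ l : List (GraphLetter E),
    Relation.ReflTransGen (GraphStep E) l (norm l)
  | [] => Relation.ReflTransGen.refl
  | a :: l => by
    have h1 : Relation.ReflTransGen (GraphStep E) (a :: l) (a :: norm l) :=
      Relation.ReflTransGen.lift (a :: ·) (fun _ _ h => consStep a h) _ _ (normReach l)
    exact h1.trans (pushReach (norm l) (normNormal l) a)

lemma normAppend (u v : List (GraphLetter E)) : norm (u ++ v) = u.foldr push (norm v) :=
  List.foldr_append

lemma stepNorm {x y : List (GraphLetter E)} (h : GraphStep E x y) : norm x = norm y := by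
  rcases h with ⟨w, w', a, ha, rfl, rfl⟩ | ⟨w, w', a, b, c, h1, h2, h3, rfl, rfl⟩
  · rw [show w ++ [a] ++ w' = w ++ ([a] ++ w') from by simp, normAppend, normAppend, normAppend,
      show List.foldr push (norm w') [a] = push a (norm w') from rfl,
      pushId (normNormal w') ha]
  · have hcc : c = comp a b h1 :=
      Subtype.ext (show c.1 = (a.1.1, b.1.2) by rw [← h2, ← h3])
    rw [show w ++ [a, b] ++ w' = w ++ ([a, b] ++ w') from by simp,
      show w ++ [c] ++ w' = w ++ ([c] ++ w') from by simp,
      normAppend, normAppend, normAppend, normAppend,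
      show List.foldr push (norm w') [a, b] = push a (push b (norm w')) from rfl,
      show List.foldr push (norm w') [c] = push c (norm w') from rfl,
      hcc, pushComp (norm w') (normNormal w') a b h1]

lemma rtgNorm {x y : List (GraphLetter E)}
    (h : Relation.ReflTransGen (GraphStep E) x y) : norm x = norm y := by
  induction h with
  | refl => rfl
  | tail _ st ih => exact ih.trans (stepNorm st)

lemma stepLen {x y : List (GraphLetter E)} (h : GraphStep E x y) :
    y.length < x.length := by
  rcases h with ⟨w, w', a, _, rfl, rfl⟩ | ⟨w, w', a, b, c, _, _, _, rfl, rfl⟩ <;>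
    simp [List.length_append]

end GraphAux

/-- The string-rewriting system `(Γ_G*, →_{R_G})` associated to a graph `G = (Ω, E)` is
Noetherian and confluent. -/
theorem graphStep_noetherian_and_confluent {Ω : Type*} (E : Ω → Ω → Prop) :
    (¬ ∃ f : ℕ → List (GraphLetter E), ∀ n, GraphStep E (f n) (f (n + 1))) ∧
    (∀ w x y : List (GraphLetter E),
      Relation.ReflTransGen (GraphStep E) w x →
      Relation.ReflTransGen (GraphStep E) w y →
      Relation.Join (Relation.ReflTransGen (GraphStep E)) x y) := by
  constructor
  · rintro ⟨f, hf⟩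
    have hlen : ∀ n, (f (n + 1)).length < (f n).length := fun n => GraphAux.stepLen (hf n)
    have key : ∀ n, (f n).length + n ≤ (f 0).length := by
      intro n
      induction n with
      | zero => simp
      | succ k ih => have := hlen k; omega
    have := key ((f 0).length + 1)
    omega
  · intro w x y hx hy
    have h : GraphAux.norm x = GraphAux.norm y :=
      (GraphAux.rtgNorm hx).symm.trans (GraphAux.rtgNorm hy)
    exact ⟨GraphAux.norm x, GraphAux.normReach x, by rw [h]; exact GraphAux.normReach y⟩
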